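/- Let 2 ≤ k ≤ n, λ ∈ Γ_k ⊂ ℝ^n, and ξ ∈ ℝ^n. Then Σ_{i ≠ j} σ_{k−2;ij}(λ) ξ_i ξ_j ≤ (1 − 1/k) · ( Σ_i σ_{k−1;i}(λ) ξ_i )² / σ_k(λ). (This is the quadratic-form inequality expressing the concavity of σ_k^{1/k} on Γ_k restricted to diagonal variations.) -/

import Mathlib

open scoped BigOperators Topology
open MeasureTheory

noncomputable section

abbrev E (n : ℕ) := EuclideanSpace ℝ (Fin n)

/-- the `m`-th elementary symmetric polynomial of `lam : Fin n → ℝ` -/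
def esym (n m : ℕ) (lam : Fin n → ℝ) : ℝ :=
  ∑ s ∈ Finset.univ.powersetCard m, ∏ i ∈ s, lam i

/-- the Gårding cone `Γ_k` -/
def GCone (n k : ℕ) : Set (Fin n → ℝ) :=
  {lam | ∀ m, 1 ≤ m → m ≤ k → 0 < esym n m lam}

/-- partial derivative `∂u/∂x_i` -/
def pd {n : ℕ} (u : E n → ℝ) (i : Fin n) (x : E n) : ℝ :=
  fderiv ℝ u x (EuclideanSpace.single i 1)

/-- gradient vector `Du` -/
def gradVec {n : ℕ} (u : E n → ℝ) (x : E n) : E n :=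
  WithLp.toLp 2 fun i => pd u i x

/-- Hessian matrix `D²u` -/
def hess {n : ℕ} (u : E n → ℝ) (x : E n) : Matrix (Fin n) (Fin n) ℝ :=
  Matrix.of fun i j => pd (pd u j) i x

/-- `w = √(1+|Du|²)` -/
def wgt {n : ℕ} (u : E n → ℝ) (x : E n) : ℝ :=
  Real.sqrt (1 + ∑ i, (pd u i x) ^ 2)

/-- the matrix `γ^{ij} = δ_{ij} - u_i u_j/(w(1+w))` -/
def gam {n : ℕ} (u : E n → ℝ) (x : E n) : Matrix (Fin n) (Fin n) ℝ :=
  Matrix.of fun i j =>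
    (if i = j then (1:ℝ) else 0) - pd u i x * pd u j x / (wgt u x * (1 + wgt u x))

/-- the curvature matrix `A = (1/w) γ D²u γ`, whose eigenvalues are `κ[M_u]` -/
def curvMat {n : ℕ} (u : E n → ℝ) (x : E n) : Matrix (Fin n) (Fin n) ℝ :=
  (wgt u x)⁻¹ • (gam u x * hess u x * gam u x)

/-- Frobenius norm of the second fundamental form `h_{ij} = u_{ij}/w` -/
def sffNorm {n : ℕ} (u : E n → ℝ) (x : E n) : ℝ :=
  Real.sqrt (∑ i, ∑ j, (hess u x i j / wgt u x) ^ 2)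

/-- the eigenvalue vector of the symmetric matrix `A` lies in `S` -/
def EigsIn {n : ℕ} (A : Matrix (Fin n) (Fin n) ℝ) (S : Set (Fin n → ℝ)) : Prop :=
  ∃ hA : A.IsHermitian, hA.eigenvalues ∈ S

/-- the eigenvalue vector of `A` lies in `S` and `σ_k` of it equals `c` -/
def SigmaEig {n : ℕ} (k : ℕ) (A : Matrix (Fin n) (Fin n) ℝ) (S : Set (Fin n → ℝ)) (c : ℝ) : Prop :=
  ∃ hA : A.IsHermitian, hA.eigenvalues ∈ S ∧ esym n k hA.eigenvalues = c

/-- `σ_m` with the `i`-th entry set equal to `0`, i.e. `σ_{m;i}` -/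
def esymOff (n m : ℕ) (lam : Fin n → ℝ) (i : Fin n) : ℝ :=
  esym n m (Function.update lam i 0)

/-- `σ_m` with the `i`-th and `j`-th entries set equal to `0`, i.e. `σ_{m;ij}` -/
def esymOff2 (n m : ℕ) (lam : Fin n → ℝ) (i j : Fin n) : ℝ :=
  esym n m (Function.update (Function.update lam i 0) j 0)


set_option maxHeartbeats 1000000


open Polynomial Finset

noncomputable section Stmt9Aux

/-- the generic "sigma_k along a line" polynomial: `t ↦ Σ_{|S|=k} Π_{i∈S} (a i + b i t)` -/
def sigP {R : Type*} [CommRing R] (n k : ℕ) (a b : Fin n → R) : Polynomial R :=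
  ∑ S ∈ Finset.univ.powersetCard k, ∏ i ∈ S, (Polynomial.C (a i) + Polynomial.C (b i) * Polynomial.X)

lemma coeff_prod_linear {ι R : Type*} [CommRing R] [DecidableEq ι] (S : Finset ι)
    (a b : ι → R) (j : ℕ) :
    (∏ i ∈ S, (C (a i) + C (b i) * X)).coeff j
      = ∑ T ∈ S.powersetCard j, (∏ i ∈ T, b i) * ∏ i ∈ S \ T, a i := by
  rw [Finset.prod_congr rfl (fun i _ => add_comm (C (a i)) (C (b i) * X)), Finset.prod_add]
  have h1 : ∀ T ∈ S.powerset,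
      ((∏ i ∈ T, (C (b i) * X)) * ∏ i ∈ S \ T, C (a i))
        = C ((∏ i ∈ T, b i) * ∏ i ∈ S \ T, a i) * X ^ T.card := by
    intro T _
    rw [Finset.prod_mul_distrib, Finset.prod_const, ← map_prod C b, ← map_prod C a, map_mul]
    ring
  rw [Finset.sum_congr rfl h1, Polynomial.finset_sum_coeff]
  have h2 : ∀ T ∈ S.powerset,
      (C ((∏ i ∈ T, b i) * ∏ i ∈ S \ T, a i) * X ^ T.card).coeff j
        = if T.card = j then (∏ i ∈ T, b i) * ∏ i ∈ S \ T, a i else 0 := by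
    intro T _
    rw [Polynomial.coeff_C_mul, Polynomial.coeff_X_pow]
    by_cases h : T.card = j
    · simp [h]
    · rw [if_neg h, if_neg (fun hj => h hj.symm), mul_zero]
  rw [Finset.sum_congr rfl h2, ← Finset.sum_filter, Finset.powersetCard_eq_filter]

lemma sigP_natDegree_le {R : Type*} [CommRing R] (n k : ℕ) (a b : Fin n → R) :
    (sigP n k a b).natDegree ≤ k := by
  apply Polynomial.natDegree_sum_le_of_forall_le
  intro S hS
  refine (Polynomial.natDegree_prod_le _ _).trans ?_
  have : ∀ i ∈ S, (C (a i) + C (b i) * X).natDegree ≤ 1 := by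
    intro i _
    refine (Polynomial.natDegree_add_le _ _).trans (max_le (by simp) ?_)
    exact (Polynomial.natDegree_C_mul_le _ _).trans Polynomial.natDegree_X_le
  refine (Finset.sum_le_sum this).trans ?_
  rw [Finset.sum_const, smul_eq_mul, mul_one]
  exact le_of_eq (Finset.mem_powersetCard.mp hS).2

/-- reindexing: summing over pairs `T ⊆ S`, `|S| = k`, `|T| = j` equals summing over
disjoint pairs `(T, U)`. -/
lemma sum_powersetCard_split {ι M : Type*} [DecidableEq ι] [Fintype ι] [AddCommMonoid M]
    {k j : ℕ} (hjk : j ≤ k) (F : Finset ι → Finset ι → M) :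
    ∑ S ∈ Finset.univ.powersetCard k, ∑ T ∈ S.powersetCard j, F T (S \ T)
      = ∑ T ∈ Finset.univ.powersetCard j,
          ∑ U ∈ ((Finset.univ : Finset ι) \ T).powersetCard (k - j), F T U := by
  rw [Finset.sum_sigma' _ _ (fun S T => F T (S \ T)),
      Finset.sum_sigma' _ _ (fun T U => F T U)]
  refine Finset.sum_nbij' (fun p => ⟨p.2, p.1 \ p.2⟩) (fun p => ⟨p.1 ∪ p.2, p.1⟩) ?_ ?_ ?_ ?_ ?_
  · rintro ⟨S, T⟩ hp
    rw [Finset.mem_sigma, Finset.mem_powersetCard] at hp ⊢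
    obtain ⟨⟨hSu, hSk⟩, hTS⟩ := hp
    rw [Finset.mem_powersetCard] at hTS
    refine ⟨⟨hTS.1.trans hSu, hTS.2⟩, ?_⟩
    rw [Finset.mem_powersetCard]
    exact ⟨Finset.sdiff_subset_sdiff hSu le_rfl,
      by rw [Finset.card_sdiff_of_subset hTS.1, hSk, hTS.2]⟩
  · rintro ⟨T, U⟩ hp
    rw [Finset.mem_sigma, Finset.mem_powersetCard] at hp ⊢
    obtain ⟨⟨hTu, hTj⟩, hU⟩ := hp
    rw [Finset.mem_powersetCard, Finset.subset_sdiff] at hU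
    obtain ⟨⟨hUu, hdisj⟩, hUc⟩ := hU
    constructor
    · constructor
      · exact Finset.union_subset hTu hUu
      · rw [Finset.card_union_of_disjoint hdisj.symm, hTj, hUc]
        omega
    · rw [Finset.mem_powersetCard]
      exact ⟨Finset.subset_union_left, hTj⟩
  · rintro ⟨S, T⟩ hp
    rw [Finset.mem_sigma, Finset.mem_powersetCard] at hp
    obtain ⟨_, hTS⟩ := hp
    rw [Finset.mem_powersetCard] at hTS
    have : T ∪ (S \ T) = S := Finset.union_sdiff_of_subset hTS.1
    simp [this]
  · rintro ⟨T, U⟩ hp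
    rw [Finset.mem_sigma, Finset.mem_powersetCard] at hp
    obtain ⟨_, hU⟩ := hp
    rw [Finset.mem_powersetCard, Finset.subset_sdiff] at hU
    have : (T ∪ U) \ T = U := Finset.union_sdiff_cancel_left hU.1.2.symm
    simp [this]
  · rintro ⟨S, T⟩ _
    rfl

/-- the coefficients of `sigP`. -/
lemma sigP_coeff {R : Type*} [CommRing R] (n k : ℕ) (a b : Fin n → R) {j : ℕ} (hjk : j ≤ k) :
    (sigP n k a b).coeff j
      = ∑ T ∈ Finset.univ.powersetCard j, (∏ i ∈ T, b i) *
          ∑ U ∈ ((Finset.univ : Finset (Fin n)) \ T).powersetCard (k - j), ∏ i ∈ U, a i := by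
  rw [sigP, Polynomial.finset_sum_coeff]
  rw [Finset.sum_congr rfl (fun S _ => coeff_prod_linear S a b j)]
  rw [sum_powersetCard_split hjk (fun T U => (∏ i ∈ T, b i) * ∏ i ∈ U, a i)]
  exact Finset.sum_congr rfl fun T _ => by rw [Finset.mul_sum]

end Stmt9Aux

/-- swap two disjoint-set sums -/
lemma sum_disjoint_swap {ι M : Type*} [DecidableEq ι] [Fintype ι] [AddCommMonoid M]
    (i j : ℕ) (F : Finset ι → Finset ι → M) :
    ∑ T ∈ Finset.univ.powersetCard j, ∑ U ∈ ((Finset.univ : Finset ι) \ T).powersetCard i, F T U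
      = ∑ U ∈ Finset.univ.powersetCard i,
          ∑ T ∈ ((Finset.univ : Finset ι) \ U).powersetCard j, F T U := by
  rw [Finset.sum_sigma' _ _ (fun T U => F T U), Finset.sum_sigma' _ _ (fun U T => F T U)]
  refine Finset.sum_nbij' (fun p => ⟨p.2, p.1⟩) (fun p => ⟨p.2, p.1⟩) ?_ ?_ ?_ ?_ ?_
  · rintro ⟨T, U⟩ hp
    rw [Finset.mem_sigma, Finset.mem_powersetCard, Finset.mem_powersetCard,
      Finset.subset_sdiff] at hp
    rw [Finset.mem_sigma, Finset.mem_powersetCard, Finset.mem_powersetCard, Finset.subset_sdiff]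
    exact ⟨⟨hp.2.1.1, hp.2.2⟩, ⟨hp.1.1, hp.2.1.2.symm⟩, hp.1.2⟩
  · rintro ⟨U, T⟩ hp
    rw [Finset.mem_sigma, Finset.mem_powersetCard, Finset.mem_powersetCard,
      Finset.subset_sdiff] at hp
    rw [Finset.mem_sigma, Finset.mem_powersetCard, Finset.mem_powersetCard, Finset.subset_sdiff]
    exact ⟨⟨hp.2.1.1, hp.2.2⟩, ⟨hp.1.1, hp.2.1.2.symm⟩, hp.1.2⟩
  · rintro ⟨T, U⟩ _; rfl
  · rintro ⟨U, T⟩ _; rfl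
  · rintro ⟨T, U⟩ _; rfl

/-- swap a set-sum with a point-sum -/
lemma sum_powersetCard_erase {ι M : Type*} [DecidableEq ι] [AddCommMonoid M]
    (W : Finset ι) (m : ℕ) (G : Finset ι → ι → M) :
    ∑ T ∈ W.powersetCard m, ∑ i ∈ W \ T, G T i
      = ∑ i ∈ W, ∑ T ∈ (W.erase i).powersetCard m, G T i := by
  rw [Finset.sum_sigma' _ _ (fun T i => G T i), Finset.sum_sigma' _ _ (fun i T => G T i)]
  refine Finset.sum_nbij' (fun p => ⟨p.2, p.1⟩) (fun p => ⟨p.2, p.1⟩) ?_ ?_ ?_ ?_ ?_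
  · rintro ⟨T, i⟩ hp
    rw [Finset.mem_sigma, Finset.mem_powersetCard, Finset.mem_sdiff] at hp
    rw [Finset.mem_sigma, Finset.mem_powersetCard, Finset.subset_erase]
    exact ⟨hp.2.1, ⟨hp.1.1, fun hi => hp.2.2 hi⟩, hp.1.2⟩
  · rintro ⟨i, T⟩ hp
    rw [Finset.mem_sigma, Finset.mem_powersetCard, Finset.subset_erase] at hp
    rw [Finset.mem_sigma, Finset.mem_powersetCard, Finset.mem_sdiff]
    exact ⟨⟨hp.2.1.1, hp.2.2⟩, hp.1, hp.2.1.2⟩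
  · rintro ⟨T, i⟩ _; rfl
  · rintro ⟨i, T⟩ _; rfl
  · rintro ⟨T, i⟩ _; rfl

/-- removing an updated-to-zero coordinate from an elementary symmetric sum -/
lemma sum_powersetCard_update {ι : Type*} [DecidableEq ι] {R : Type*} [CommRing R]
    (W : Finset ι) (m : ℕ) (g : ι → R) (i : ι) :
    ∑ T ∈ W.powersetCard m, ∏ l ∈ T, Function.update g i 0 l
      = ∑ T ∈ (W.erase i).powersetCard m, ∏ l ∈ T, g l := by
  rw [← Finset.sum_filter_add_sum_filter_not (W.powersetCard m) (fun T => i ∈ T)]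
  have h0 : ∑ T ∈ (W.powersetCard m).filter (fun T => i ∈ T), ∏ l ∈ T, Function.update g i 0 l
      = 0 := by
    refine Finset.sum_eq_zero fun T hT => ?_
    rw [Finset.mem_filter] at hT
    exact Finset.prod_eq_zero hT.2 (Function.update_self i 0 g)
  rw [h0, zero_add]
  have hset : (W.powersetCard m).filter (fun T => i ∉ T) = (W.erase i).powersetCard m := by
    ext T
    simp only [Finset.mem_filter, Finset.mem_powersetCard, Finset.subset_erase]
    tauto
  rw [hset]
  refine Finset.sum_congr rfl fun T hT => Finset.prod_congr rfl fun l hl => ?_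
  rw [Finset.mem_powersetCard, Finset.subset_erase] at hT
  have hli : l ≠ i := by rintro rfl; exact hT.1.2 hl
  exact Function.update_of_ne hli 0 g

lemma esymOff_eq (n m : ℕ) (lam : Fin n → ℝ) (i : Fin n) :
    esymOff n m lam i
      = ∑ T ∈ (Finset.univ.erase i).powersetCard m, ∏ l ∈ T, lam l := by
  rw [esymOff, esym]
  exact sum_powersetCard_update Finset.univ m lam i

lemma esymOff2_eq (n m : ℕ) (lam : Fin n → ℝ) (i j : Fin n) :
    esymOff2 n m lam i j
      = ∑ T ∈ ((Finset.univ.erase i).erase j).powersetCard m, ∏ l ∈ T, lam l := by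
  rw [esymOff2, esym, sum_powersetCard_update Finset.univ m _ j,
    sum_powersetCard_update (Finset.univ.erase j) m lam i, Finset.erase_right_comm]

/-- sums over 1-element subsets -/
lemma sum_powersetCard_one {ι : Type*} [DecidableEq ι] (W : Finset ι) (f : ι → ℝ) :
    ∑ U ∈ W.powersetCard 1, ∏ l ∈ U, f l = ∑ i ∈ W, f i := by
  rw [Finset.powersetCard_one, Finset.sum_map]
  simp

/-- sums over 2-element subsets -/
lemma sum_powersetCard_two {ι : Type*} [DecidableEq ι] (W : Finset ι) (f : ι → ℝ) :
    2 * ∑ U ∈ W.powersetCard 2, ∏ l ∈ U, f l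
      = ∑ i ∈ W, ∑ j ∈ W.erase i, f i * f j := by
  induction W using Finset.induction_on with
  | empty =>
    rw [Finset.powersetCard_eq_empty.mpr (by simp)]
    simp
  | @insert a W ha ih =>
    rw [Finset.powersetCard_succ_insert ha, Finset.sum_union, Finset.sum_image]
    · have h1 : ∀ T ∈ W.powersetCard 1, ∏ l ∈ insert a T, f l = f a * ∏ l ∈ T, f l := by
        intro T hT
        rw [Finset.mem_powersetCard] at hT
        exact Finset.prod_insert (fun haT => ha (hT.1 haT))
      rw [Finset.sum_congr rfl h1, ← Finset.mul_sum, sum_powersetCard_one]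
      have hrhs : ∑ i ∈ insert a W, ∑ j ∈ (insert a W).erase i, f i * f j
          = (∑ j ∈ W, f a * f j) + ∑ i ∈ W, (f i * f a + ∑ j ∈ W.erase i, f i * f j) := by
        rw [Finset.sum_insert ha, Finset.erase_insert ha]
        congr 1
        refine Finset.sum_congr rfl fun i hi => ?_
        have hia : i ≠ a := fun h => ha (h ▸ hi)
        rw [Finset.erase_insert_of_ne (Ne.symm hia),
          Finset.sum_insert (fun h => ha (Finset.erase_subset _ _ h))]
      rw [hrhs, Finset.sum_add_distrib, ← ih]
      have hc : ∑ x ∈ W, f x * f a = ∑ x ∈ W, f a * f x :=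
        Finset.sum_congr rfl fun x _ => mul_comm _ _
      rw [hc, Finset.mul_sum, show Nat.succ 1 = 2 from rfl]
      ring
    · intro T hT T' hT' h
      rw [Finset.mem_coe, Finset.mem_powersetCard] at hT hT'
      have haT : a ∉ T := fun hx => ha (hT.1 hx)
      have haT' : a ∉ T' := fun hx => ha (hT'.1 hx)
      rw [← Finset.erase_insert haT, ← Finset.erase_insert haT', h]
    · rw [Finset.disjoint_right]
      intro T hT hT2
      rw [Finset.mem_image] at hT
      obtain ⟨T', hT', rfl⟩ := hT
      rw [Finset.mem_powersetCard] at hT2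
      exact ha (hT2.1 (Finset.mem_insert_self a T'))

lemma esym_zero_eq_one (n : ℕ) (y : Fin n → ℝ) : esym n 0 y = 1 := by
  rw [esym, Finset.powersetCard_zero]
  simp

lemma sigP_coeff_top (n k : ℕ) (lam ξ : Fin n → ℝ) :
    (sigP n k ξ lam).coeff k = esym n k lam := by
  rw [sigP_coeff n k ξ lam le_rfl, esym]
  refine Finset.sum_congr rfl fun T hT => ?_
  rw [Nat.sub_self, Finset.powersetCard_zero]
  simp

lemma sigP_coeff_k1 (n k : ℕ) (lam ξ : Fin n → ℝ) (hk : 1 ≤ k) :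
    (sigP n k ξ lam).coeff (k - 1) = ∑ i, esymOff n (k - 1) lam i * ξ i := by
  rw [sigP_coeff n k ξ lam (Nat.sub_le k 1), (show k - (k - 1) = 1 by omega)]
  have h2 : ∀ T ∈ Finset.univ.powersetCard (k - 1),
      (∏ i ∈ T, lam i) *
          ∑ U ∈ ((Finset.univ : Finset (Fin n)) \ T).powersetCard 1, ∏ i ∈ U, ξ i
        = ∑ i ∈ (Finset.univ : Finset (Fin n)) \ T, (∏ l ∈ T, lam l) * ξ i := by
    intro T _
    rw [sum_powersetCard_one, Finset.mul_sum]
  rw [Finset.sum_congr rfl h2,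
    sum_powersetCard_erase Finset.univ (k - 1) (fun T i => (∏ l ∈ T, lam l) * ξ i)]
  refine Finset.sum_congr rfl fun i _ => ?_
  rw [esymOff_eq, Finset.sum_mul]

lemma sigP_coeff_k2 (n k : ℕ) (lam ξ : Fin n → ℝ) (hk : 2 ≤ k) :
    2 * (sigP n k ξ lam).coeff (k - 2)
      = ∑ i, ∑ j ∈ Finset.univ.erase i, esymOff2 n (k - 2) lam i j * ξ i * ξ j := by
  rw [sigP_coeff n k ξ lam (Nat.sub_le k 2), (show k - (k - 2) = 2 by omega), Finset.mul_sum]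
  have h2 : ∀ T ∈ Finset.univ.powersetCard (k - 2),
      2 * ((∏ i ∈ T, lam i) *
          ∑ U ∈ ((Finset.univ : Finset (Fin n)) \ T).powersetCard 2, ∏ i ∈ U, ξ i)
        = ∑ i ∈ (Finset.univ : Finset (Fin n)) \ T,
            ∑ j ∈ ((Finset.univ : Finset (Fin n)) \ T).erase i,
              (∏ l ∈ T, lam l) * (ξ i * ξ j) := by
    intro T _
    rw [← mul_assoc, mul_comm 2 (∏ i ∈ T, lam i), mul_assoc, sum_powersetCard_two,
      Finset.mul_sum]
    refine Finset.sum_congr rfl fun i _ => ?_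
    rw [Finset.mul_sum]
  rw [Finset.sum_congr rfl h2,
    sum_powersetCard_erase Finset.univ (k - 2)
      (fun T i => ∑ j ∈ ((Finset.univ : Finset (Fin n)) \ T).erase i,
        (∏ l ∈ T, lam l) * (ξ i * ξ j))]
  refine Finset.sum_congr rfl fun i _ => ?_
  have h3 : ∀ T ∈ (Finset.univ.erase i).powersetCard (k - 2),
      ∑ j ∈ ((Finset.univ : Finset (Fin n)) \ T).erase i, (∏ l ∈ T, lam l) * (ξ i * ξ j)
        = ∑ j ∈ (Finset.univ.erase i) \ T, (∏ l ∈ T, lam l) * (ξ i * ξ j) := by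
    intro T hT
    refine Finset.sum_congr ?_ fun _ _ => rfl
    ext j
    simp only [Finset.mem_erase, Finset.mem_sdiff, Finset.mem_univ, true_and]
    tauto
  rw [Finset.sum_congr rfl h3,
    sum_powersetCard_erase (Finset.univ.erase i) (k - 2)
      (fun T j => (∏ l ∈ T, lam l) * (ξ i * ξ j))]
  refine Finset.sum_congr rfl fun j hj => ?_
  rw [esymOff2_eq, mul_assoc, Finset.sum_mul]

lemma sigP_one_coeff (n k : ℕ) (y : Fin n → ℝ) {j : ℕ} (hj : j ≤ k) :
    (sigP n k y (fun _ => (1 : ℝ))).coeff j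
      = ((n - (k - j)).choose j : ℝ) * esym n (k - j) y := by
  rw [sigP_coeff n k y _ hj]
  have h1 : ∀ T ∈ (Finset.univ : Finset (Fin n)).powersetCard j,
      (∏ i ∈ T, (fun _ => (1:ℝ)) i) *
          ∑ U ∈ ((Finset.univ : Finset (Fin n)) \ T).powersetCard (k - j), ∏ i ∈ U, y i
        = ∑ U ∈ ((Finset.univ : Finset (Fin n)) \ T).powersetCard (k - j), ∏ i ∈ U, y i := by
    intro T _
    simp
  rw [Finset.sum_congr rfl h1, sum_disjoint_swap (k - j) j (fun T U => ∏ i ∈ U, y i), esym,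
    Finset.mul_sum]
  refine Finset.sum_congr rfl fun U hU => ?_
  rw [Finset.mem_powersetCard] at hU
  rw [Finset.sum_const, Finset.card_powersetCard, Finset.card_sdiff_of_subset hU.1, Finset.card_univ,
    Fintype.card_fin, hU.2, nsmul_eq_mul]

lemma sigP_one_natDegree (n k : ℕ) (y : Fin n → ℝ) (hkn : k ≤ n) :
    (sigP n k y (fun _ => (1 : ℝ))).natDegree = k := by
  refine le_antisymm (sigP_natDegree_le n k _ _) (Polynomial.le_natDegree_of_ne_zero ?_)
  rw [sigP_one_coeff n k y le_rfl, Nat.sub_self, esym_zero_eq_one, Nat.sub_zero, mul_one]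
  exact_mod_cast Nat.choose_pos hkn |>.ne'

lemma derivative_finset_prod {ι : Type*} [DecidableEq ι] (S : Finset ι) (f : ι → Polynomial ℝ) :
    Polynomial.derivative (∏ i ∈ S, f i)
      = ∑ j ∈ S, (∏ i ∈ S.erase j, f i) * Polynomial.derivative (f j) := by
  induction S using Finset.induction_on with
  | empty => simp
  | @insert a S ha ih =>
    rw [Finset.prod_insert ha, Polynomial.derivative_mul, ih, Finset.sum_insert ha,
      Finset.erase_insert ha, Finset.mul_sum]
    have h : ∀ j ∈ S, (∏ i ∈ (insert a S).erase j, f i) * Polynomial.derivative (f j)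
        = f a * ((∏ i ∈ S.erase j, f i) * Polynomial.derivative (f j)) := by
      intro j hj
      have hja : a ≠ j := fun h => ha (h ▸ hj)
      rw [Finset.erase_insert_of_ne hja,
        Finset.prod_insert (fun h => ha (Finset.erase_subset _ _ h)), mul_assoc]
    conv_rhs => rw [Finset.sum_congr rfl h]
    ring

/-- reindexing pairs `(S, j ∈ S)` as `(T, j ∉ T)` -/
lemma sum_erase_pairs {ι M : Type*} [DecidableEq ι] [Fintype ι] [AddCommMonoid M]
    (m : ℕ) (G : Finset ι → ι → M) :
    ∑ S ∈ Finset.univ.powersetCard (m + 1), ∑ j ∈ S, G (S.erase j) j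
      = ∑ T ∈ Finset.univ.powersetCard m, ∑ j ∈ (Finset.univ : Finset ι) \ T, G T j := by
  have e1 := Finset.sum_sigma (Finset.univ.powersetCard (m + 1)) (fun S => S)
    (fun x : Σ _ : Finset ι, ι => G (x.1.erase x.2) x.2)
  have e2 := Finset.sum_sigma (Finset.univ.powersetCard m)
    (fun T => (Finset.univ : Finset ι) \ T) (fun x : Σ _ : Finset ι, ι => G x.1 x.2)
  rw [← e1, ← e2]
  refine Finset.sum_nbij' (fun p => ⟨p.1.erase p.2, p.2⟩) (fun p => ⟨insert p.2 p.1, p.2⟩)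
    ?_ ?_ ?_ ?_ ?_
  · rintro ⟨S, j⟩ hp
    rw [Finset.mem_sigma, Finset.mem_powersetCard] at hp
    rw [Finset.mem_sigma, Finset.mem_powersetCard, Finset.mem_sdiff]
    refine ⟨⟨(Finset.erase_subset _ _).trans hp.1.1, ?_⟩, Finset.mem_univ _,
      Finset.notMem_erase _ _⟩
    rw [Finset.card_erase_of_mem hp.2, hp.1.2]
    omega
  · rintro ⟨T, j⟩ hp
    rw [Finset.mem_sigma, Finset.mem_powersetCard, Finset.mem_sdiff] at hp
    rw [Finset.mem_sigma, Finset.mem_powersetCard]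
    refine ⟨⟨Finset.subset_univ _, ?_⟩, Finset.mem_insert_self _ _⟩
    rw [Finset.card_insert_of_notMem hp.2.2, hp.1.2]
  · rintro ⟨S, j⟩ hp
    rw [Finset.mem_sigma] at hp
    simp [Finset.insert_erase hp.2]
  · rintro ⟨T, j⟩ hp
    rw [Finset.mem_sigma, Finset.mem_powersetCard, Finset.mem_sdiff] at hp
    simp [Finset.erase_insert hp.2.2]
  · rintro ⟨S, j⟩ _
    rfl

lemma sigP_one_derivative (n : ℕ) (y : Fin n → ℝ) (m : ℕ) :
    Polynomial.derivative (sigP n (m + 1) y (fun _ => (1 : ℝ)))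
      = Polynomial.C ((n - m : ℕ) : ℝ) * sigP n m y (fun _ => (1 : ℝ)) := by
  rw [sigP, Polynomial.derivative_sum]
  have h1 : ∀ S ∈ (Finset.univ : Finset (Fin n)).powersetCard (m + 1),
      Polynomial.derivative (∏ i ∈ S, (Polynomial.C (y i) + Polynomial.C (1:ℝ) * Polynomial.X))
        = ∑ j ∈ S, ∏ i ∈ S.erase j, (Polynomial.C (y i) + Polynomial.C (1:ℝ) * Polynomial.X) := by
    intro S _
    rw [derivative_finset_prod]
    refine Finset.sum_congr rfl fun j _ => ?_
    simp
  rw [Finset.sum_congr rfl h1,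
    sum_erase_pairs m (fun T j => ∏ i ∈ T, (Polynomial.C (y i) + Polynomial.C (1:ℝ) * Polynomial.X))]
  rw [sigP, Finset.mul_sum]
  refine Finset.sum_congr rfl fun T hT => ?_
  rw [Finset.sum_const, Finset.mem_powersetCard] at *
  rw [Finset.card_sdiff_of_subset (Finset.subset_univ T), Finset.card_univ, Fintype.card_fin, hT.2]
  rw [nsmul_eq_mul]
  simp [Polynomial.C_eq_natCast]

lemma sigP_one_top (n : ℕ) (y : Fin n → ℝ) :
    sigP n n y (fun _ => (1 : ℝ))
      = ((Finset.univ.val.map (fun i => -(y i))).map (fun a => Polynomial.X - Polynomial.C a)).prod := by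
  rw [sigP]
  have hps : (Finset.univ : Finset (Fin n)).powersetCard n = {Finset.univ} := by
    simpa using Finset.powersetCard_self (Finset.univ : Finset (Fin n))
  rw [hps, Finset.sum_singleton]
  have h1 : ∀ i ∈ (Finset.univ : Finset (Fin n)),
      Polynomial.C (y i) + Polynomial.C (1:ℝ) * Polynomial.X
        = Polynomial.X - Polynomial.C (-(y i)) := by
    intro i _
    rw [Polynomial.C_1, one_mul, map_neg, sub_neg_eq_add, add_comm]
  rw [Finset.prod_congr rfl h1, Multiset.map_map]
  rfl

lemma sigP_one_roots_card (n : ℕ) (y : Fin n → ℝ) :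
    ∀ m : ℕ, m ≤ n → ((sigP n m y (fun _ => (1 : ℝ))).roots.card = m) := by
  have key : ∀ d : ℕ, d ≤ n → ((sigP n (n - d) y (fun _ => (1 : ℝ))).roots.card = n - d) := by
    intro d
    induction d with
    | zero =>
      intro _
      rw [Nat.sub_zero, sigP_one_top, Polynomial.roots_multiset_prod_X_sub_C]
      simp
    | succ d ih =>
      intro hd
      have hd' : d ≤ n := by omega
      have h1 := ih hd'
      set m := n - (d + 1) with hm
      have hnd : n - d = m + 1 := by omega
      rw [hnd] at h1
      have hder := sigP_one_derivative n y m
      have hne : ((n - m : ℕ) : ℝ) ≠ 0 := by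
        have : 0 < n - m := by omega
        exact_mod_cast this.ne'
      have hcard := Polynomial.card_roots_le_derivative (sigP n (m + 1) y (fun _ => (1 : ℝ)))
      rw [hder, Polynomial.roots_C_mul _ hne, h1] at hcard
      have hle : (sigP n m y (fun _ => (1 : ℝ))).roots.card ≤ m := by
        refine (Polynomial.card_roots' _).trans ?_
        rw [sigP_one_natDegree n m y (by omega)]
      omega
  intro m hm
  have := key (n - m) (Nat.sub_le n m)
  rwa [Nat.sub_sub_self hm] at this

lemma sigP_one_splits (n m : ℕ) (hmn : m ≤ n) (y : Fin n → ℝ) :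
    ((sigP n m y (fun _ => (1 : ℝ))).map (algebraMap ℝ ℂ)).roots
      = (sigP n m y (fun _ => (1 : ℝ))).roots.map (algebraMap ℝ ℂ) := by
  refine (Polynomial.roots_map_of_injective_of_card_eq_natDegree (algebraMap ℝ ℂ).injective ?_).symm
  rw [sigP_one_roots_card n y m hmn,
    sigP_one_natDegree n m y hmn]

lemma sigP_one_complex_roots_real (n m : ℕ) (hmn : m ≤ n) (y : Fin n → ℝ) :
    ∀ z ∈ ((sigP n m y (fun _ => (1 : ℝ))).map (algebraMap ℝ ℂ)).roots, z.im = 0 := by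
  intro z hz
  rw [sigP_one_splits n m hmn y, Multiset.mem_map] at hz
  obtain ⟨r, _, rfl⟩ := hz
  rfl

lemma sigP_one_ne_zero (n m : ℕ) (hmn : m ≤ n) (y : Fin n → ℝ) :
    sigP n m y (fun _ => (1 : ℝ)) ≠ 0 := by
  intro h
  have := sigP_one_natDegree n m y hmn
  have hc : (sigP n m y (fun _ => (1 : ℝ))).coeff m ≠ 0 := by
    rw [sigP_one_coeff n m y le_rfl, Nat.sub_self, esym_zero_eq_one, Nat.sub_zero, mul_one]
    exact_mod_cast (Nat.choose_pos hmn).ne'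
  rw [h] at hc
  simp at hc

lemma sigP_one_roots_neg (n k : ℕ) (hk : 1 ≤ k) (hkn : k ≤ n) (lam : Fin n → ℝ)
    (hlam : lam ∈ GCone n k) :
    ∀ r ∈ (sigP n k lam (fun _ => (1 : ℝ))).roots, r < 0 := by
  intro r hr
  rw [Polynomial.mem_roots'] at hr
  by_contra hge
  push_neg at hge
  have heval : (sigP n k lam (fun _ => (1 : ℝ))).eval r = 0 := hr.2
  have hdeg : (sigP n k lam (fun _ => (1 : ℝ))).natDegree < k + 1 := by
    rw [sigP_one_natDegree n k lam hkn]; omega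
  rw [Polynomial.eval_eq_sum_range' hdeg] at heval
  have hpos : 0 < ∑ i ∈ Finset.range (k + 1),
      (sigP n k lam (fun _ => (1 : ℝ))).coeff i * r ^ i := by
    refine Finset.sum_pos' ?_ ⟨0, Finset.mem_range.mpr (by omega), ?_⟩
    · intro i hi
      rw [Finset.mem_range] at hi
      have hik : i ≤ k := by omega
      rw [sigP_one_coeff n k lam hik]
      refine mul_nonneg (mul_nonneg (by positivity) ?_) (pow_nonneg hge i)
      rcases Nat.eq_zero_or_pos (k - i) with h0 | hpos'
      · rw [h0, esym_zero_eq_one]; norm_num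
      · exact (hlam (k - i) hpos' (Nat.sub_le k i)).le
    · rw [sigP_one_coeff n k lam (by omega : 0 ≤ k), Nat.sub_zero, pow_zero, mul_one]
      refine mul_pos ?_ (hlam k hk le_rfl)
      have : 0 < (n - k).choose 0 := Nat.choose_pos (Nat.zero_le _)
      exact_mod_cast this
  rw [heval] at hpos
  exact lt_irrefl 0 hpos

lemma sigP_coeff_top_gen {R : Type*} [CommRing R] (n k : ℕ) (a b : Fin n → R) :
    (sigP n k a b).coeff k = ∑ T ∈ Finset.univ.powersetCard k, ∏ i ∈ T, b i := by
  rw [sigP_coeff n k a b le_rfl]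
  refine Finset.sum_congr rfl fun T hT => ?_
  rw [Nat.sub_self, Finset.powersetCard_zero]
  simp

lemma sigP_eval {R : Type*} [CommRing R] (n k : ℕ) (a b : Fin n → R) (t : R) :
    (sigP n k a b).eval t
      = ∑ S ∈ Finset.univ.powersetCard k, ∏ i ∈ S, (a i + b i * t) := by
  rw [sigP, Polynomial.eval_finset_sum]
  refine Finset.sum_congr rfl fun S _ => ?_
  rw [Polynomial.eval_prod]
  exact Finset.prod_congr rfl fun i _ => by simp

/-- Cauchy's bound for roots. -/
lemma root_bound {p : Polynomial ℂ} {k : ℕ} (hdeg : p.natDegree ≤ k) (hck : p.coeff k ≠ 0)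
    {z : ℂ} (hz : p.eval z = 0) :
    ‖z‖ ≤ 1 + (∑ j ∈ Finset.range k, ‖p.coeff j‖) / ‖p.coeff k‖ := by
  have hckn : (0:ℝ) < ‖p.coeff k‖ := norm_pos_iff.mpr hck
  rcases Nat.eq_zero_or_pos k with rfl | hk1
  · exfalso
    have h0 : p.eval z = p.coeff 0 := by
      rw [Polynomial.eval_eq_sum_range' (show p.natDegree < 1 by omega), Finset.sum_range_one]
      simp
    rw [hz] at h0
    exact hck h0.symm
  by_cases h1 : ‖z‖ ≤ 1
  · have h2 : (0:ℝ) ≤ (∑ j ∈ Finset.range k, ‖p.coeff j‖) / ‖p.coeff k‖ := by positivity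
    linarith
  push_neg at h1
  obtain ⟨m, rfl⟩ : ∃ m, k = m + 1 := ⟨k - 1, by omega⟩
  have hdeg' : p.natDegree < m + 1 + 1 := by omega
  rw [Polynomial.eval_eq_sum_range' hdeg', Finset.sum_range_succ] at hz
  have hck2 : p.coeff (m + 1) * z ^ (m + 1) = -∑ j ∈ Finset.range (m + 1), p.coeff j * z ^ j := by
    linear_combination hz
  have hnorm : ‖p.coeff (m + 1)‖ * ‖z‖ ^ (m + 1)
      ≤ ∑ j ∈ Finset.range (m + 1), ‖p.coeff j‖ * ‖z‖ ^ j := by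
    calc ‖p.coeff (m + 1)‖ * ‖z‖ ^ (m + 1) = ‖p.coeff (m + 1) * z ^ (m + 1)‖ := by
          rw [norm_mul, norm_pow]
      _ = ‖∑ j ∈ Finset.range (m + 1), p.coeff j * z ^ j‖ := by rw [hck2, norm_neg]
      _ ≤ ∑ j ∈ Finset.range (m + 1), ‖p.coeff j * z ^ j‖ := norm_sum_le _ _
      _ = ∑ j ∈ Finset.range (m + 1), ‖p.coeff j‖ * ‖z‖ ^ j := by
          refine Finset.sum_congr rfl fun j _ => ?_
          rw [norm_mul, norm_pow]
  have hstep : ∀ j ∈ Finset.range (m + 1), ‖p.coeff j‖ * ‖z‖ ^ j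
      ≤ ‖p.coeff j‖ * ‖z‖ ^ m := by
    intro j hj
    rw [Finset.mem_range] at hj
    exact mul_le_mul_of_nonneg_left (pow_le_pow_right₀ h1.le (by omega)) (norm_nonneg _)
  have h3 : ‖p.coeff (m + 1)‖ * ‖z‖ ^ (m + 1)
      ≤ (∑ j ∈ Finset.range (m + 1), ‖p.coeff j‖) * ‖z‖ ^ m :=
    (hnorm.trans (Finset.sum_le_sum hstep)).trans_eq (Finset.sum_mul _ _ _).symm
  have hzm : (0:ℝ) < ‖z‖ ^ m := by positivity
  have h4 : ‖p.coeff (m + 1)‖ * ‖z‖ ≤ ∑ j ∈ Finset.range (m + 1), ‖p.coeff j‖ := by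
    have h5 : ‖p.coeff (m + 1)‖ * ‖z‖ * ‖z‖ ^ m
        ≤ (∑ j ∈ Finset.range (m + 1), ‖p.coeff j‖) * ‖z‖ ^ m := by
      calc ‖p.coeff (m + 1)‖ * ‖z‖ * ‖z‖ ^ m = ‖p.coeff (m + 1)‖ * ‖z‖ ^ (m + 1) := by ring
        _ ≤ _ := h3
    exact le_of_mul_le_mul_right h5 hzm
  have h6 : ‖z‖ ≤ (∑ j ∈ Finset.range (m + 1), ‖p.coeff j‖) / ‖p.coeff (m + 1)‖ := by
    rw [le_div_iff₀ hckn, mul_comm]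
    exact h4
  linarith

lemma multiset_prod_norm_ge (ε : ℝ) (hε : 0 ≤ ε) (M : Multiset ℂ)
    (h : ∀ x ∈ M, ε ≤ ‖x‖) : ε ^ Multiset.card M ≤ ‖M.prod‖ := by
  induction M using Multiset.induction_on with
  | empty => simp
  | cons a M ih =>
    rw [Multiset.prod_cons, Multiset.card_cons, norm_mul, pow_succ, mul_comm (ε ^ _) ε]
    have ha : ε ≤ ‖a‖ := h a (Multiset.mem_cons_self a M)
    have hM : ε ^ Multiset.card M ≤ ‖M.prod‖ := ih fun x hx => h x (Multiset.mem_cons_of_mem hx)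
    exact mul_le_mul ha hM (by positivity) (norm_nonneg _)

/-- roots persist under small perturbations (within a continuous family with constant
leading coefficient). -/
lemma hurwitz_step (k : ℕ) (c : ℂ) (hc : c ≠ 0) (Q : ℝ → Polynomial ℂ)
    (hdeg : ∀ s, (Q s).natDegree ≤ k) (hlead : ∀ s, (Q s).coeff k = c)
    (hcont : ∀ j, Continuous fun s => (Q s).coeff j)
    (s₀ : ℝ) (z : ℂ) (hz : (Q s₀).eval z = 0) {ε : ℝ} (hε : 0 < ε) :
    ∃ δ > 0, ∀ s : ℝ, |s - s₀| < δ → ∃ w ∈ (Q s).roots, ‖w - z‖ < ε := by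
  have hdegk : ∀ s, (Q s).natDegree = k := fun s =>
    le_antisymm (hdeg s) (Polynomial.le_natDegree_of_ne_zero (by rw [hlead s]; exact hc))
  have hQne : ∀ s, Q s ≠ 0 := by
    intro s h
    have := hlead s
    rw [h] at this
    simp at this
    exact hc this.symm
  have hcards : ∀ s, Multiset.card (Q s).roots = k := by
    intro s
    rw [← hdegk s]
    exact (Polynomial.splits_iff_card_roots.mp (IsAlgClosed.splits (Q s)))
  -- continuity of s ↦ (Q s).eval z
  have hevalcont : Continuous fun s => (Q s).eval z := by
    have heq : ∀ s, (Q s).eval z = ∑ j ∈ Finset.range (k + 1), (Q s).coeff j * z ^ j := by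
      intro s
      rw [Polynomial.eval_eq_sum_range' (n := k + 1) (by rw [hdegk s]; omega)]
    rw [funext heq]
    exact continuous_finset_sum _ fun j _ => ((hcont j).mul continuous_const)
  have h0 : Filter.Tendsto (fun s => (Q s).eval z) (nhds s₀) (nhds 0) := by
    rw [← hz]
    exact hevalcont.tendsto s₀
  have hball : ∀ᶠ s in nhds s₀, ‖(Q s).eval z‖ < ‖c‖ * ε ^ k := by
    have hpos : 0 < ‖c‖ * ε ^ k := mul_pos (norm_pos_iff.mpr hc) (pow_pos hε k)
    have := h0.norm
    simp only [norm_zero] at this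
    exact this.eventually_lt_const hpos
  rw [Metric.eventually_nhds_iff] at hball
  obtain ⟨δ, hδ, hball⟩ := hball
  refine ⟨δ, hδ, fun s hs => ?_⟩
  by_contra hno
  push_neg at hno
  -- all roots are at distance ≥ ε from z
  have hfar : ∀ w ∈ (Q s).roots, ε ≤ ‖z - w‖ := by
    intro w hw
    have := hno w hw
    rw [norm_sub_rev]
    linarith [this]
  have hfact := (IsAlgClosed.splits (Q s)).eq_prod_roots
  have hevalnorm : ‖(Q s).eval z‖ = ‖c‖ * ‖((Q s).roots.map (fun a => z - a)).prod‖ := by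
    conv_lhs => rw [hfact]
    rw [Polynomial.eval_mul, Polynomial.eval_C, Polynomial.eval_multiset_prod, norm_mul]
    congr 2
    · rw [Polynomial.leadingCoeff, hdegk s, hlead s]
    · rw [Multiset.map_map]
      refine congrArg _ (Multiset.map_congr rfl fun w _ => ?_)
      simp
  have hgood : ε ^ k ≤ ‖((Q s).roots.map (fun a => z - a)).prod‖ := by
    have := multiset_prod_norm_ge ε hε.le ((Q s).roots.map (fun a => z - a)) ?_
    · rwa [Multiset.card_map, hcards s] at this
    · intro x hx
      rw [Multiset.mem_map] at hx
      obtain ⟨w, hw, rfl⟩ := hx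
      exact hfar w hw
  have hlt := hball (show dist s s₀ < δ by rwa [Real.dist_eq])
  rw [hevalnorm] at hlt
  have : ‖c‖ * ε ^ k ≤ ‖c‖ * ‖((Q s).roots.map (fun a => z - a)).prod‖ :=
    mul_le_mul_of_nonneg_left hgood (norm_nonneg _)
  linarith

/-- limits of roots along a convergent family of polynomials are roots of the limit. -/
lemma seq_root_limit (k : ℕ) (c : ℂ) (hc : c ≠ 0) (P : ℕ → Polynomial ℂ) (P' : Polynomial ℂ)
    (hdeg : ∀ m, (P m).natDegree ≤ k) (hdeg' : P'.natDegree ≤ k)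
    (hlead : ∀ m, (P m).coeff k = c)
    (hco : ∀ j, Filter.Tendsto (fun m => (P m).coeff j) Filter.atTop (nhds (P'.coeff j)))
    (z : ℕ → ℂ) (hz : ∀ m, (P m).eval (z m) = 0) (him : ∀ m, 0 ≤ (z m).im) :
    ∃ w, P'.eval w = 0 ∧ 0 ≤ w.im := by
  -- bound on roots
  have hbnd : ∀ m, ‖z m‖ ≤ 1 + (∑ j ∈ Finset.range k, ‖(P m).coeff j‖) / ‖c‖ := by
    intro m
    have := root_bound (hdeg m) (by rw [hlead m]; exact hc) (hz m)
    rwa [hlead m] at this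
  have hBtend : Filter.Tendsto (fun m => 1 + (∑ j ∈ Finset.range k, ‖(P m).coeff j‖) / ‖c‖)
      Filter.atTop (nhds (1 + (∑ j ∈ Finset.range k, ‖P'.coeff j‖) / ‖c‖)) := by
    refine Filter.Tendsto.const_add _ (Filter.Tendsto.div_const ?_ _)
    exact tendsto_finset_sum _ fun j _ => (hco j).norm
  obtain ⟨C, hC⟩ := hBtend.bddAbove_range
  have hCz : ∀ m, z m ∈ Metric.closedBall (0 : ℂ) C := by
    intro m
    rw [Metric.mem_closedBall, dist_zero_right]
    exact (hbnd m).trans (hC (Set.mem_range_self m))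
  obtain ⟨a, _, φ, hφ, hlim⟩ := tendsto_subseq_of_bounded Metric.isBounded_closedBall hCz
  refine ⟨a, ?_, ?_⟩
  · have htend : Filter.Tendsto (fun m => (P (φ m)).eval (z (φ m))) Filter.atTop
        (nhds (P'.eval a)) := by
      have heq : ∀ m, (P (φ m)).eval (z (φ m))
          = ∑ j ∈ Finset.range (k + 1), (P (φ m)).coeff j * (z (φ m)) ^ j := by
        intro m
        rw [Polynomial.eval_eq_sum_range' (n := k + 1) (by have := hdeg (φ m); omega)]
      have heq' : P'.eval a = ∑ j ∈ Finset.range (k + 1), P'.coeff j * a ^ j := by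
        rw [Polynomial.eval_eq_sum_range' (by omega : P'.natDegree < k + 1)]
      rw [funext heq, heq']
      refine tendsto_finset_sum _ fun j _ => Filter.Tendsto.mul ?_ ?_
      · exact (hco j).comp hφ.tendsto_atTop
      · exact hlim.pow j
    have hzero : Filter.Tendsto (fun m => (P (φ m)).eval (z (φ m))) Filter.atTop (nhds 0) := by
      simp only [hz]
      exact tendsto_const_nhds
    exact (tendsto_nhds_unique htend hzero)
  · have : Filter.Tendsto (fun m => (z (φ m)).im) Filter.atTop (nhds a.im) :=
      (Complex.continuous_im.tendsto a).comp hlim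
    exact ge_of_tendsto' this fun m => him (φ m)

/-- the family `Q_s(τ) = σ_k(ξ + i s e + τ λ)` -/
def Qfam (n k : ℕ) (ξ lam : Fin n → ℝ) (s : ℝ) : Polynomial ℂ :=
  sigP n k (fun i => (ξ i : ℂ) + s * Complex.I) (fun i => ((lam i : ℝ) : ℂ))

/-- the family `R_η(u) = σ_k(η + i e + u λ)` -/
def Rfam (n k : ℕ) (lam : Fin n → ℝ) (η : Fin n → ℝ) : Polynomial ℂ :=
  sigP n k (fun i => (η i : ℂ) + Complex.I) (fun i => ((lam i : ℝ) : ℂ))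

lemma sigP_map {R S : Type*} [CommRing R] [CommRing S] (φ : R →+* S) (n k : ℕ)
    (a b : Fin n → R) :
    (sigP n k a b).map φ = sigP n k (fun i => φ (a i)) (fun i => φ (b i)) := by
  rw [sigP, sigP, Polynomial.map_sum]
  refine Finset.sum_congr rfl fun S _ => ?_
  rw [Polynomial.map_prod]
  refine Finset.prod_congr rfl fun i _ => ?_
  simp

lemma sigP_lead_complex (n k : ℕ) (lam : Fin n → ℝ) (a : Fin n → ℂ) :
    (sigP n k a (fun i => ((lam i : ℝ) : ℂ))).coeff k = ((esym n k lam : ℝ) : ℂ) := by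
  rw [sigP_coeff_top_gen, esym]
  push_cast
  rfl

lemma sigP_natdeg_complex (n k : ℕ) (lam : Fin n → ℝ) (hσ : esym n k lam ≠ 0) (a : Fin n → ℂ) :
    (sigP n k a (fun i => ((lam i : ℝ) : ℂ))).natDegree = k := by
  refine le_antisymm (sigP_natDegree_le n k _ _) (Polynomial.le_natDegree_of_ne_zero ?_)
  rw [sigP_lead_complex]
  exact_mod_cast hσ

lemma Qfam_coeff_continuous (n k : ℕ) (ξ lam : Fin n → ℝ) (j : ℕ) :
    Continuous fun s : ℝ => (Qfam n k ξ lam s).coeff j := by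
  simp only [Qfam, sigP, Polynomial.finset_sum_coeff, coeff_prod_linear]
  refine continuous_finset_sum _ fun S _ => continuous_finset_sum _ fun T _ => ?_
  refine Continuous.mul continuous_const (continuous_finset_prod _ fun i _ => ?_)
  exact Continuous.add continuous_const (Complex.continuous_ofReal.mul continuous_const)

lemma Qfam_no_real_root (n k : ℕ) (hk : 1 ≤ k) (hkn : k ≤ n) (ξ lam : Fin n → ℝ)
    {s : ℝ} (hs : s ≠ 0) (τ : ℝ) :
    (Qfam n k ξ lam s).eval (τ : ℂ) ≠ 0 := by
  set y : Fin n → ℝ := fun i => ξ i + τ * lam i with hy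
  have h1 : (Qfam n k ξ lam s).eval (τ : ℂ)
      = ((sigP n k y (fun _ => (1:ℝ))).map (algebraMap ℝ ℂ)).eval ((s : ℂ) * Complex.I) := by
    rw [Qfam, sigP_eval, sigP_map, sigP_eval]
    refine Finset.sum_congr rfl fun S _ => Finset.prod_congr rfl fun i _ => ?_
    simp only [hy, Complex.coe_algebraMap, map_one]
    push_cast
    ring
  rw [h1]
  intro h0
  have hne : (sigP n k y (fun _ => (1:ℝ))).map (algebraMap ℝ ℂ) ≠ 0 := by
    rw [Polynomial.map_ne_zero_iff (algebraMap ℝ ℂ).injective]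
    exact sigP_one_ne_zero n k hkn y
  have hmem : (s : ℂ) * Complex.I
      ∈ ((sigP n k y (fun _ => (1:ℝ))).map (algebraMap ℝ ℂ)).roots :=
    Polynomial.mem_roots'.mpr ⟨hne, h0⟩
  have := sigP_one_complex_roots_real n k hkn y _ hmem
  simp only [Complex.mul_im, Complex.ofReal_re, Complex.I_im, Complex.ofReal_im,
    Complex.I_re, mul_zero, mul_one, zero_mul, add_zero] at this
  exact hs this

lemma Rfam_zero_roots (n k : ℕ) (hk : 1 ≤ k) (hkn : k ≤ n) (lam : Fin n → ℝ)
    (hlam : lam ∈ GCone n k) :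
    ∀ u : ℂ, (Rfam n k lam (fun _ => 0)).eval u = 0 → u.im < 0 := by
  intro u hu
  have hu0 : u ≠ 0 := by
    intro h0
    rw [h0, Rfam, sigP_eval] at hu
    have : ∀ S ∈ (Finset.univ : Finset (Fin n)).powersetCard k,
        (∏ i ∈ S, (((0:ℝ):ℂ) + Complex.I + ((lam i : ℝ):ℂ) * 0)) = Complex.I ^ k := by
      intro S hS
      rw [Finset.mem_powersetCard] at hS
      rw [← hS.2, ← Finset.prod_const Complex.I]
      exact Finset.prod_congr rfl fun i _ => by push_cast; ring
    rw [Finset.sum_congr rfl this, Finset.sum_const, Finset.card_powersetCard,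
      Finset.card_univ, Fintype.card_fin, nsmul_eq_mul] at hu
    have hI : Complex.I ^ k ≠ 0 := pow_ne_zero k Complex.I_ne_zero
    have hch : ((n.choose k : ℕ) : ℂ) ≠ 0 := by
      exact_mod_cast (Nat.choose_pos hkn).ne'
    exact (mul_ne_zero hch hI) hu
  -- reduce to q_lam
  have h1 : (Rfam n k lam (fun _ => 0)).eval u
      = u ^ k * ((sigP n k lam (fun _ => (1:ℝ))).map (algebraMap ℝ ℂ)).eval (u⁻¹ * Complex.I) := by
    rw [Rfam, sigP_eval, sigP_map, sigP_eval, Finset.mul_sum]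
    refine Finset.sum_congr rfl fun S hS => ?_
    rw [Finset.mem_powersetCard] at hS
    rw [← hS.2, ← Finset.prod_const u, ← Finset.prod_mul_distrib]
    refine Finset.prod_congr rfl fun i _ => ?_
    simp only [Complex.coe_algebraMap, map_one]
    field_simp
    push_cast
    ring
  rw [h1] at hu
  have hev : ((sigP n k lam (fun _ => (1:ℝ))).map (algebraMap ℝ ℂ)).eval (u⁻¹ * Complex.I)
      = 0 := by
    rcases mul_eq_zero.mp hu with h | h
    · exact absurd h (pow_ne_zero k hu0)
    · exact h
  have hne : (sigP n k lam (fun _ => (1:ℝ))).map (algebraMap ℝ ℂ) ≠ 0 := by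
    rw [Polynomial.map_ne_zero_iff (algebraMap ℝ ℂ).injective]
    exact sigP_one_ne_zero n k hkn lam
  have hmem : u⁻¹ * Complex.I
      ∈ ((sigP n k lam (fun _ => (1:ℝ))).map (algebraMap ℝ ℂ)).roots :=
    Polynomial.mem_roots'.mpr ⟨hne, hev⟩
  rw [sigP_one_splits n k hkn lam, Multiset.mem_map] at hmem
  obtain ⟨r, hr, hru⟩ := hmem
  have hrneg : r < 0 := sigP_one_roots_neg n k hk hkn lam hlam r hr
  have hrne : (r : ℂ) ≠ 0 := by
    exact_mod_cast hrneg.ne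
  -- from ↑r = u⁻¹ * I we get u = ↑r⁻¹ * I
  have hu' : u = ((r : ℝ) : ℂ)⁻¹ * Complex.I := by
    have h2 : (algebraMap ℝ ℂ) r * u = Complex.I := by
      rw [hru]
      field_simp
    field_simp [Complex.coe_algebraMap] at h2 ⊢
    rw [← h2]
    simp [Complex.coe_algebraMap, mul_comm]
  rw [hu']
  have : (((r : ℝ) : ℂ)⁻¹ * Complex.I).im = r⁻¹ := by
    rw [← Complex.ofReal_inv]
    simp
  rw [this]
  exact inv_lt_zero.mpr hrneg

lemma Qfam_scale (n k : ℕ) (ξ lam : Fin n → ℝ) {s : ℝ} (hs : s ≠ 0) (τ : ℂ) :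
    (Qfam n k ξ lam s).eval τ
      = (s : ℂ) ^ k * (Rfam n k lam (fun i => ξ i / s)).eval (τ / (s : ℂ)) := by
  have hsc : (s : ℂ) ≠ 0 := by exact_mod_cast hs
  rw [Qfam, Rfam, sigP_eval, sigP_eval, Finset.mul_sum]
  refine Finset.sum_congr rfl fun S hS => ?_
  rw [Finset.mem_powersetCard] at hS
  rw [← hS.2, ← Finset.prod_const (s : ℂ), ← Finset.prod_mul_distrib]
  refine Finset.prod_congr rfl fun i _ => ?_
  push_cast
  field_simp

lemma Rfam_coeff_tendsto (n k : ℕ) (ξ lam : Fin n → ℝ) (s : ℕ → ℝ)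
    (hs : ∀ m : ℕ, ((m : ℝ) + 1) ≤ s m) (j : ℕ) :
    Filter.Tendsto (fun m => (Rfam n k lam (fun i => ξ i / s m)).coeff j) Filter.atTop
      (nhds ((Rfam n k lam (fun _ => 0)).coeff j)) := by
  have hstop : Filter.Tendsto s Filter.atTop Filter.atTop := by
    refine Filter.tendsto_atTop_mono hs ?_
    exact Filter.tendsto_atTop_add_const_right _ 1 tendsto_natCast_atTop_atTop
  have hcoord : ∀ i : Fin n, Filter.Tendsto (fun m => ((ξ i / s m : ℝ) : ℂ)) Filter.atTop
      (nhds (((0 : ℝ) : ℂ))) := by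
    intro i
    exact (Complex.continuous_ofReal.tendsto 0).comp (tendsto_const_nhds.div_atTop hstop)
  simp only [Rfam, sigP, Polynomial.finset_sum_coeff, coeff_prod_linear]
  refine tendsto_finset_sum _ fun S _ => tendsto_finset_sum _ fun T _ => ?_
  refine Filter.Tendsto.mul tendsto_const_nhds (tendsto_finset_prod _ fun i _ => ?_)
  exact Filter.Tendsto.add (hcoord i) tendsto_const_nhds

lemma Q_eventually_neg (n k : ℕ) (hk : 1 ≤ k) (hkn : k ≤ n) (ξ lam : Fin n → ℝ)
    (hlam : lam ∈ GCone n k) :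
    ∃ s₀ : ℝ, 0 < s₀ ∧ ∀ s : ℝ, s₀ ≤ s → ∀ z ∈ (Qfam n k ξ lam s).roots, z.im < 0 := by
  have hσ : 0 < esym n k lam := hlam k hk le_rfl
  by_contra hcon
  push_neg at hcon
  have hseq : ∀ m : ℕ, ∃ x : ℝ, ((m : ℝ) + 1) ≤ x ∧ ∃ z ∈ (Qfam n k ξ lam x).roots, 0 ≤ z.im := by
    intro m
    obtain ⟨x, hx1, z, hz, him⟩ := hcon ((m : ℝ) + 1) (by positivity)
    exact ⟨x, hx1, z, hz, him⟩
  choose s hs z hz him using hseq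
  have hspos : ∀ m, (0:ℝ) < s m := fun m => lt_of_lt_of_le (by positivity) (hs m)
  have hscne : ∀ m, ((s m : ℝ) : ℂ) ≠ 0 := fun m => by exact_mod_cast (hspos m).ne'
  -- pass to the rescaled family
  set P : ℕ → Polynomial ℂ := fun m => Rfam n k lam (fun i => ξ i / s m) with hP
  have heval : ∀ m, (P m).eval (z m / (s m : ℂ)) = 0 := by
    intro m
    have h0 : (Qfam n k ξ lam (s m)).eval (z m) = 0 :=
      (Polynomial.mem_roots'.mp (hz m)).2
    rw [Qfam_scale n k ξ lam (hspos m).ne' (z m)] at h0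
    rcases mul_eq_zero.mp h0 with h | h
    · exact absurd h (pow_ne_zero k (hscne m))
    · exact h
  have him' : ∀ m, 0 ≤ (z m / (s m : ℂ)).im := by
    intro m
    rw [Complex.div_ofReal_im]
    exact div_nonneg (him m) (hspos m).le
  have hσc : ((esym n k lam : ℝ) : ℂ) ≠ 0 := by exact_mod_cast hσ.ne'
  obtain ⟨w, hw, hwim⟩ := seq_root_limit k _ hσc P (Rfam n k lam (fun _ => 0))
    (fun m => sigP_natDegree_le n k _ _) (sigP_natDegree_le n k _ _)
    (fun m => sigP_lead_complex n k lam _)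
    (fun j => Rfam_coeff_tendsto n k ξ lam s hs j)
    (fun m => z m / (s m : ℂ)) heval him'
  exact absurd hwim (not_le.mpr (Rfam_zero_roots n k hk hkn lam hlam w hw))

lemma Q_all_neg (n k : ℕ) (hk : 1 ≤ k) (hkn : k ≤ n) (ξ lam : Fin n → ℝ)
    (hlam : lam ∈ GCone n k) :
    ∀ t : ℝ, 0 < t → ∀ z ∈ (Qfam n k ξ lam t).roots, z.im < 0 := by
  have hσ : 0 < esym n k lam := hlam k hk le_rfl
  have hσc : ((esym n k lam : ℝ) : ℂ) ≠ 0 := by exact_mod_cast hσ.ne'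
  have hdeg : ∀ s : ℝ, (Qfam n k ξ lam s).natDegree ≤ k := fun s => sigP_natDegree_le n k _ _
  have hlead : ∀ s : ℝ, (Qfam n k ξ lam s).coeff k = ((esym n k lam : ℝ) : ℂ) :=
    fun s => sigP_lead_complex n k lam _
  have hQne : ∀ s : ℝ, Qfam n k ξ lam s ≠ 0 := by
    intro s h
    have := hlead s
    rw [h, Polynomial.coeff_zero] at this
    exact hσc this.symm
  obtain ⟨s₀, hs₀, hup⟩ := Q_eventually_neg n k hk hkn ξ lam hlam
  intro t ht
  by_contra hbad
  push_neg at hbad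
  obtain ⟨z0, hz0, hz0im⟩ := hbad
  have hts : t < s₀ := by
    by_contra hge
    push_neg at hge
    exact absurd hz0im (not_le.mpr (hup t hge z0 hz0))
  set Sset : Set ℝ := {x | t ≤ x ∧ x ≤ s₀ ∧ ∃ z ∈ (Qfam n k ξ lam x).roots, 0 ≤ z.im}
    with hSset
  have hne : t ∈ Sset := ⟨le_rfl, hts.le, z0, hz0, hz0im⟩
  have hbdd : BddAbove Sset := ⟨s₀, fun x hx => hx.2.1⟩
  set c := sSup Sset with hcdef
  have hct : t ≤ c := le_csSup hbdd hne
  have hcs : c ≤ s₀ := csSup_le ⟨t, hne⟩ (fun x hx => hx.2.1)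
  have hcpos : 0 < c := lt_of_lt_of_le ht hct
  -- the sup still carries a bad root
  have hcbad : ∃ w ∈ (Qfam n k ξ lam c).roots, 0 ≤ w.im := by
    have hseq : ∀ m : ℕ, ∃ x, x ∈ Sset ∧ c - 1 / (m + 1) < x := by
      intro m
      obtain ⟨x, hxS, hxlt⟩ := exists_lt_of_lt_csSup ⟨t, hne⟩
        (show c - 1 / ((m : ℝ) + 1) < c by
          have : (0:ℝ) < 1 / ((m : ℝ) + 1) := by positivity
          linarith)
      exact ⟨x, hxS, hxlt⟩
    choose x hxS hxlt using hseq
    have hxle : ∀ m, x m ≤ c := fun m => le_csSup hbdd (hxS m)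
    have hxlim : Filter.Tendsto x Filter.atTop (nhds c) := by
      have h1 : Filter.Tendsto (fun m : ℕ => c - 1 / ((m : ℝ) + 1)) Filter.atTop (nhds c) := by
        have h2 : Filter.Tendsto (fun m : ℕ => 1 / ((m : ℝ) + 1)) Filter.atTop (nhds 0) :=
          tendsto_one_div_add_atTop_nhds_zero_nat
        simpa using tendsto_const_nhds.sub h2
      exact tendsto_of_tendsto_of_tendsto_of_le_of_le h1 tendsto_const_nhds
        (fun m => (hxlt m).le) hxle
    have hzex : ∀ m, ∃ z ∈ (Qfam n k ξ lam (x m)).roots, 0 ≤ z.im := fun m => (hxS m).2.2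
    choose zz hzz hzzim using hzex
    have heval : ∀ m, (Qfam n k ξ lam (x m)).eval (zz m) = 0 :=
      fun m => (Polynomial.mem_roots'.mp (hzz m)).2
    obtain ⟨w, hw, hwim⟩ := seq_root_limit k _ hσc (fun m => Qfam n k ξ lam (x m))
      (Qfam n k ξ lam c) (fun m => hdeg (x m)) (hdeg c) (fun m => hlead (x m))
      (fun j => ((Qfam_coeff_continuous n k ξ lam j).tendsto c).comp hxlim) zz heval hzzim
    exact ⟨w, Polynomial.mem_roots'.mpr ⟨hQne c, hw⟩, hwim⟩
  obtain ⟨w, hw, hwim⟩ := hcbad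
  have hweval : (Qfam n k ξ lam c).eval w = 0 := (Polynomial.mem_roots'.mp hw).2
  have hwim' : 0 < w.im := by
    rcases eq_or_lt_of_le hwim with h | h
    · exfalso
      have hwre : w = ((w.re : ℝ) : ℂ) := Complex.ext rfl (by simp [← h])
      rw [hwre] at hweval
      exact Qfam_no_real_root n k hk hkn ξ lam hcpos.ne' w.re hweval
    · exact h
  have hclt : c < s₀ := by
    rcases eq_or_lt_of_le hcs with h | h
    · exfalso
      rw [h] at hw
      exact absurd hwim (not_le.mpr (hup s₀ le_rfl w hw))
    · exact h
  obtain ⟨δ, hδ, hroot⟩ := hurwitz_step k _ hσc (Qfam n k ξ lam) hdeg hlead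
    (Qfam_coeff_continuous n k ξ lam) c w hweval (ε := w.im / 2) (by positivity)
  set s := min (c + δ / 2) s₀ with hsdef
  have hsgtc : c < s := lt_min (by linarith) hclt
  have hsd : |s - c| < δ := by
    rw [abs_lt]
    constructor
    · linarith
    · have h1 : s ≤ c + δ / 2 := min_le_left _ _
      linarith
  obtain ⟨v, hv, hvcl⟩ := hroot s hsd
  have hvim : 0 < v.im := by
    have h1 : |v.im - w.im| ≤ ‖v - w‖ := by
      have := Complex.abs_im_le_norm (v - w)
      rwa [Complex.sub_im] at this
    have h2 : |v.im - w.im| < w.im / 2 := lt_of_le_of_lt h1 hvcl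
    rw [abs_lt] at h2
    linarith [h2.1]
  have hsS : s ∈ Sset := ⟨hct.trans hsgtc.le, min_le_right _ _, v, hv, hvim.le⟩
  exact absurd (le_csSup hbdd hsS) (not_le.mpr hsgtc)

lemma F_eq_Qfam_zero (n k : ℕ) (ξ lam : Fin n → ℝ) :
    (sigP n k ξ lam).map (algebraMap ℝ ℂ) = Qfam n k ξ lam 0 := by
  rw [sigP_map, Qfam]
  congr 1
  all_goals funext i
  all_goals simp [Complex.coe_algebraMap]

lemma F_roots_real (n k : ℕ) (hk : 1 ≤ k) (hkn : k ≤ n) (ξ lam : Fin n → ℝ)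
    (hlam : lam ∈ GCone n k) :
    ∀ z : ℂ, ((sigP n k ξ lam).map (algebraMap ℝ ℂ)).eval z = 0 → z.im = 0 := by
  have hσ : 0 < esym n k lam := hlam k hk le_rfl
  have hσc : ((esym n k lam : ℝ) : ℂ) ≠ 0 := by exact_mod_cast hσ.ne'
  have hdeg : ∀ s : ℝ, (Qfam n k ξ lam s).natDegree ≤ k := fun s => sigP_natDegree_le n k _ _
  have hlead : ∀ s : ℝ, (Qfam n k ξ lam s).coeff k = ((esym n k lam : ℝ) : ℂ) :=
    fun s => sigP_lead_complex n k lam _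
  -- main step : any root has im ≤ 0
  have main : ∀ z : ℂ, ((sigP n k ξ lam).map (algebraMap ℝ ℂ)).eval z = 0 → z.im ≤ 0 := by
    intro z hz
    rw [F_eq_Qfam_zero] at hz
    by_contra hpos
    push_neg at hpos
    obtain ⟨δ, hδ, hroot⟩ := hurwitz_step k _ hσc (Qfam n k ξ lam) hdeg hlead
      (Qfam_coeff_continuous n k ξ lam) 0 z hz (ε := z.im) hpos
    obtain ⟨v, hv, hvcl⟩ := hroot (δ / 2) (by rw [sub_zero, abs_of_pos (by linarith)]; linarith)
    have hvneg : v.im < 0 := Q_all_neg n k hk hkn ξ lam hlam (δ / 2) (by linarith) v hv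
    have h1 : |v.im - z.im| ≤ ‖v - z‖ := by
      have := Complex.abs_im_le_norm (v - z)
      rwa [Complex.sub_im] at this
    have h2 : |v.im - z.im| < z.im := lt_of_le_of_lt h1 hvcl
    rw [abs_lt] at h2
    linarith [h2.1]
  intro z hz
  refine le_antisymm (main z hz) ?_
  -- conjugate root
  have hconj : ((sigP n k ξ lam).map (algebraMap ℝ ℂ)).eval ((starRingEnd ℂ) z) = 0 := by
    have h1 : ((sigP n k ξ lam).map (algebraMap ℝ ℂ)).eval ((starRingEnd ℂ) z)
        = (starRingEnd ℂ) (((sigP n k ξ lam).map (algebraMap ℝ ℂ)).eval z) := by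
      rw [Polynomial.eval_map, Polynomial.eval_map, Polynomial.hom_eval₂]
      congr 1
      refine RingHom.ext fun r => ?_
      simp [Complex.coe_algebraMap, Complex.conj_ofReal]
    rw [h1, hz, map_zero]
  have := main _ hconj
  rw [Complex.conj_im] at this
  linarith

lemma multiset_esymm_cons (a : ℝ) (s : Multiset ℝ) (m : ℕ) :
    (a ::ₘ s).esymm (m + 1) = s.esymm (m + 1) + a * s.esymm m := by
  rw [Multiset.esymm, Multiset.powersetCard_cons, Multiset.map_add, Multiset.sum_add]
  congr 1
  rw [Multiset.map_map, Multiset.esymm, ← Multiset.sum_map_mul_left]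
  refine congrArg Multiset.sum (Multiset.map_congr rfl fun t _ => ?_)
  simp [Multiset.prod_cons]

lemma multiset_esymm_one (s : Multiset ℝ) : s.esymm 1 = s.sum := by
  rw [Multiset.esymm, Multiset.powersetCard_one, Multiset.map_map]
  simp

lemma multiset_esymm_two (s : Multiset ℝ) :
    2 * s.esymm 2 = s.sum ^ 2 - (s.map (fun r => r ^ 2)).sum := by
  induction s using Multiset.induction_on with
  | empty => simp [Multiset.esymm, show Multiset.powersetCard 2 (0 : Multiset ℝ) = 0 from Multiset.powersetCard_zero_right 1]
  | cons a s ih =>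
    rw [show (a ::ₘ s).esymm 2 = s.esymm 2 + a * s.esymm 1 from multiset_esymm_cons a s 1,
      multiset_esymm_one, Multiset.sum_cons, Multiset.map_cons, Multiset.sum_cons]
    linear_combination ih

lemma multiset_sq_sum_le (s : Multiset ℝ) :
    s.sum ^ 2 ≤ (Multiset.card s : ℝ) * (s.map (fun r => r ^ 2)).sum := by
  induction s using Multiset.induction_on with
  | empty => simp
  | cons a s ih =>
    rw [Multiset.sum_cons, Multiset.card_cons, Multiset.map_cons, Multiset.sum_cons]
    push_cast
    have hQ0 : 0 ≤ (s.map (fun r => r ^ 2)).sum := by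
      refine Multiset.sum_nonneg fun x hx => ?_
      obtain ⟨r, _, rfl⟩ := Multiset.mem_map.mp hx
      positivity
    by_cases hm : Multiset.card s = 0
    · obtain rfl : s = 0 := Multiset.card_eq_zero.mp hm
      simp
    · have hmpos : (0:ℝ) < (Multiset.card s : ℝ) := by
        exact_mod_cast Nat.pos_of_ne_zero hm
      have key : (Multiset.card s : ℝ) * ((a + s.sum) ^ 2)
          ≤ (Multiset.card s : ℝ)
              * (((Multiset.card s : ℝ) + 1) * (a ^ 2 + (s.map (fun r => r ^ 2)).sum)) := by
        nlinarith [ih, sq_nonneg ((Multiset.card s : ℝ) * a - s.sum),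
          show (0:ℝ) ≤ (Multiset.card s : ℝ) + 1 by positivity]
      exact le_of_mul_le_mul_left key hmpos

lemma esymm_map_ofReal (s : Multiset ℝ) (m : ℕ) :
    (s.map (fun r : ℝ => (r : ℂ))).esymm m = ((s.esymm m : ℝ) : ℂ) := by
  have h0 : ((s.esymm m : ℝ) : ℂ)
      = ((s.powersetCard m).map (fun t => Complex.ofRealHom t.prod)).sum := by
    rw [show ((s.esymm m : ℝ) : ℂ) = Complex.ofRealHom (s.esymm m) from rfl, Multiset.esymm,
      map_multiset_sum, Multiset.map_map]
    simp [Function.comp_def]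
  rw [h0, Multiset.esymm, Multiset.powersetCard_map, Multiset.map_map]
  refine congrArg Multiset.sum (Multiset.map_congr rfl fun t _ => ?_)
  simp only [Function.comp_apply]
  exact (map_multiset_prod Complex.ofRealHom t).symm

theorem stmt9' (n k : ℕ) (hk : 2 ≤ k) (hkn : k ≤ n)
    (lam ξ : Fin n → ℝ) (hlam : lam ∈ GCone n k) :
    ∑ i, ∑ j ∈ Finset.univ.erase i, esymOff2 n (k - 2) lam i j * ξ i * ξ j
      ≤ (1 - 1 / (k : ℝ)) * (∑ i, esymOff n (k - 1) lam i * ξ i) ^ 2 / esym n k lam := by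
  have hk1 : 1 ≤ k := by omega
  have hσ : 0 < esym n k lam := hlam k hk1 le_rfl
  set f : Polynomial ℝ := sigP n k ξ lam with hf
  set F : Polynomial ℂ := f.map (algebraMap ℝ ℂ) with hF
  have hFalt : F = sigP n k (fun i => ((ξ i : ℝ) : ℂ)) (fun i => ((lam i : ℝ) : ℂ)) := by
    rw [hF, hf, sigP_map]
    rfl
  have hdegF : F.natDegree = k := by
    rw [hFalt]
    exact sigP_natdeg_complex n k lam hσ.ne' _
  have hcard : Multiset.card F.roots = k := by
    rw [← hdegF]
    exact Polynomial.splits_iff_card_roots.mp (IsAlgClosed.splits F)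
  have hFne : F ≠ 0 := by
    intro h
    rw [h] at hdegF
    have h2 : F.coeff k = ((esym n k lam : ℝ) : ℂ) := by
      rw [hFalt]; exact sigP_lead_complex n k lam _
    rw [h, Polynomial.coeff_zero] at h2
    have : esym n k lam = 0 := by exact_mod_cast h2.symm
    exact hσ.ne' this
  have himz : ∀ z ∈ F.roots, z.im = 0 := by
    intro z hz
    exact F_roots_real n k hk1 hkn ξ lam hlam z (Polynomial.mem_roots'.mp hz).2
  set Mr : Multiset ℝ := F.roots.map Complex.re with hMr
  have hM : Mr.map (fun r : ℝ => (r : ℂ)) = F.roots := by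
    rw [hMr, Multiset.map_map]
    have h1 : ∀ z ∈ F.roots, (((fun r : ℝ => (r : ℂ)) ∘ Complex.re) z) = id z := by
      intro z hz
      exact Complex.ext rfl (by simpa using (himz z hz).symm)
    rw [Multiset.map_congr rfl h1, Multiset.map_id]
  have hcardMr : Multiset.card Mr = k := by rw [hMr, Multiset.card_map]; exact hcard
  have hlc : F.leadingCoeff = ((esym n k lam : ℝ) : ℂ) := by
    rw [Polynomial.leadingCoeff, hdegF, hFalt]
    exact sigP_lead_complex n k lam _
  have hfact := (IsAlgClosed.splits F).eq_prod_roots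
  have hcoeff : ∀ j : ℕ, j ≤ k → ((f.coeff j : ℝ) : ℂ)
      = ((esym n k lam : ℝ) : ℂ) * ((-1) ^ (k - j) * ((Mr.esymm (k - j) : ℝ) : ℂ)) := by
    intro j hj
    have h1 : ((f.coeff j : ℝ) : ℂ) = F.coeff j := by
      rw [hF, Polynomial.coeff_map]
      rfl
    rw [h1]
    conv_lhs => rw [hfact]
    rw [Polynomial.coeff_C_mul, hlc]
    congr 1
    have h2 : j ≤ Multiset.card F.roots := by rw [hcard]; exact hj
    rw [Multiset.prod_X_sub_C_coeff F.roots h2, hcard]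
    congr 1
    rw [← hM, esymm_map_ofReal]
  -- the two real coefficient identities
  set S : ℝ := Mr.sum with hSdef
  set Q : ℝ := (Mr.map (fun r => r ^ 2)).sum with hQdef
  have hc1 : f.coeff (k - 1) = -(esym n k lam * S) := by
    have h1 := hcoeff (k - 1) (by omega)
    rw [(show k - (k - 1) = 1 by omega), multiset_esymm_one] at h1
    have h2 : ((f.coeff (k - 1) : ℝ) : ℂ) = ((-(esym n k lam * S) : ℝ) : ℂ) := by
      rw [h1]
      push_cast
      ring
    exact_mod_cast h2
  have hc2 : 2 * f.coeff (k - 2) = esym n k lam * (S ^ 2 - Q) := by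
    have h1 := hcoeff (k - 2) (by omega)
    rw [(show k - (k - 2) = 2 by omega)] at h1
    have h2 : ((2 * f.coeff (k - 2) : ℝ) : ℂ)
        = ((esym n k lam * (2 * Mr.esymm 2) : ℝ) : ℂ) := by
      push_cast
      rw [h1]
      push_cast
      ring
    have h3 : 2 * f.coeff (k - 2) = esym n k lam * (2 * Mr.esymm 2) := by exact_mod_cast h2
    rw [h3, multiset_esymm_two]
  -- Cauchy-Schwarz
  have hq : S ^ 2 ≤ (k : ℝ) * Q := by
    have := multiset_sq_sum_le Mr
    rwa [hcardMr] at this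
  have hQ0 : 0 ≤ Q := by
    refine Multiset.sum_nonneg fun x hx => ?_
    obtain ⟨r, _, rfl⟩ := Multiset.mem_map.mp hx
    positivity
  have hkR : (2 : ℝ) ≤ (k : ℝ) := by exact_mod_cast hk
  have hkpos : (0 : ℝ) < (k : ℝ) := by linarith
  -- rewrite the goal
  rw [← sigP_coeff_k2 n k lam ξ hk, ← sigP_coeff_k1 n k lam ξ hk1, ← hf, hc1, hc2]
  have hrhs : (1 - 1 / (k:ℝ)) * (-(esym n k lam * S)) ^ 2 / esym n k lam
      = (1 - 1 / (k:ℝ)) * (esym n k lam * S ^ 2) := by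
    field_simp
  rw [hrhs]
  have hterm : S ^ 2 - Q ≤ (1 - 1 / (k:ℝ)) * S ^ 2 := by
    rw [one_sub_div hkpos.ne', div_mul_eq_mul_div, le_div_iff₀ hkpos]
    nlinarith [hq]
  calc esym n k lam * (S ^ 2 - Q) ≤ esym n k lam * ((1 - 1 / (k:ℝ)) * S ^ 2) :=
        mul_le_mul_of_nonneg_left hterm hσ.le
    _ = (1 - 1 / (k:ℝ)) * (esym n k lam * S ^ 2) := by ring


/-- **Concavity of `σ_k^{1/k}` (diagonal quadratic form inequality).** For `2 ≤ k ≤ n`,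
`λ ∈ Γ_k` and any `ξ ∈ ℝ^n`:
`Σ_{i≠j} σ_{k-2;ij}(λ) ξ_i ξ_j ≤ (1 - 1/k) (Σ_i σ_{k-1;i}(λ) ξ_i)² / σ_k(λ)`. -/
theorem stmt9 (n k : ℕ) (hk : 2 ≤ k) (hkn : k ≤ n)
    (lam ξ : Fin n → ℝ) (hlam : lam ∈ GCone n k) :
    ∑ i, ∑ j ∈ Finset.univ.erase i, esymOff2 n (k - 2) lam i j * ξ i * ξ j
      ≤ (1 - 1 / (k : ℝ)) * (∑ i, esymOff n (k - 1) lam i * ξ i) ^ 2 / esym n k lam := stmt9' n k hk hkn lam ξ hlam
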